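/- An (r,s)-directed hypergraph G is anadiplosis connected if and only if the underlying undirected hypergraph of its bipartite split B(G) is connected. -/

import Mathlib

/-- A directed hypergraph on a vertex type `V`, with `N` arcs, each arc having a
tail of size `r` and a head of size `s`, disjoint from each other. -/
structure DirHG (V : Type) (N r s : ℕ) where
  tail : Fin N → Finset V
  head : Fin N → Finset V
  disj : ∀ e, Disjoint (tail e) (head e)
  tail_card : ∀ e, (tail e).card = r
  head_card : ∀ e, (head e).card = s

namespace DirHG

variable {V : Type} {N r s : ℕ}

/-- The `b`-side of an arc: its tail if `b = true`, its head if `b = false`. -/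
def side (G : DirHG V N r s) (b : Bool) (e : Fin N) : Finset V :=
  if b then G.tail e else G.head e

/-- `AnaWalk G u bu w bw L` means: the list of arcs `L` is an anadiplosis walk from
`u` (lying in the `bu`-side of the first arc) to `w` (lying in the `bw`-side of the
last arc), where every intermediate vertex lies in the same side (tail or head) of
the two consecutive arcs it joins. -/
inductive AnaWalk (G : DirHG V N r s) : V → Bool → V → Bool → List (Fin N) → Prop
  | single (e : Fin N) (u w : V) (bu bw : Bool)
      (hu : u ∈ G.side bu e) (hw : w ∈ G.side bw e) : AnaWalk G u bu w bw [e]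
  | cons (e : Fin N) (u v w : V) (bu b bw : Bool) (L : List (Fin N))
      (hu : u ∈ G.side bu e) (hv : v ∈ G.side b e)
      (hL : AnaWalk G v b w bw L) : AnaWalk G u bu w bw (e :: L)

/-- `G` is anadiplosis connected: any two distinct vertices of `T(G) ∪ H(G)` are
joined by an anadiplosis walk, and every vertex of `T(G) ∩ H(G)` lies on an
anadiplosis semi-cycle (a closed anadiplosis walk with at least two pairwise
distinct arcs, starting in a tail and ending in a head or vice versa). -/
def AnaConnected (G : DirHG V N r s) : Prop :=
  (∀ u v : V, u ≠ v →
      (∃ e, u ∈ G.tail e ∨ u ∈ G.head e) → (∃ e, v ∈ G.tail e ∨ v ∈ G.head e) →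
      ∃ bu bv L, AnaWalk G u bu v bv L) ∧
  (∀ u : V, (∃ e, u ∈ G.tail e) → (∃ f, u ∈ G.head f) →
      ∃ L : List (Fin N), L.Nodup ∧ 2 ≤ L.length ∧
        (AnaWalk G u true u false L ∨ AnaWalk G u false u true L))

/-- Membership of a vertex of the bipartite split (a tail-copy `Sum.inl u` or a
head-copy `Sum.inr v`) in an arc. -/
def splitMem (G : DirHG V N r s) : V ⊕ V → Fin N → Prop
  | Sum.inl u, e => u ∈ G.tail e
  | Sum.inr v, e => v ∈ G.head e

/-- Adjacency in the underlying hypergraph of the bipartite split `B(G)`: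
two vertices are adjacent when some arc contains both. -/
def splitAdj (G : DirHG V N r s) (a b : V ⊕ V) : Prop :=
  ∃ e, G.splitMem a e ∧ G.splitMem b e

/-- Connectedness of the underlying hypergraph of the bipartite split `B(G)`:
any two of its vertices are joined by a walk. -/
def SplitConnected (G : DirHG V N r s) : Prop :=
  ∀ a b, (∃ e, G.splitMem a e) → (∃ e, G.splitMem b e) →
    Relation.ReflTransGen G.splitAdj a b

end DirHG

namespace DirHG

variable {V : Type} {N r s : ℕ} {G : DirHG V N r s}

lemma side_true (e : Fin N) : G.side true e = G.tail e := rfl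

lemma side_false (e : Fin N) : G.side false e = G.head e := rfl

/-- Encode a vertex and a side as a vertex of the bipartite split. -/
def enc (u : V) : Bool → V ⊕ V
  | true => Sum.inl u
  | false => Sum.inr u

/-- Underlying vertex of a vertex of the bipartite split. -/
def dv : V ⊕ V → V := Sum.elim id id

/-- Side of a vertex of the bipartite split. -/
def db : V ⊕ V → Bool := Sum.elim (fun _ => true) (fun _ => false)

lemma enc_dv (a : V ⊕ V) : enc (dv a) (db a) = a := by cases a <;> rfl

lemma splitMem_iff (a : V ⊕ V) (e : Fin N) :
    G.splitMem a e ↔ dv a ∈ G.side (db a) e := by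
  cases a <;> simp [splitMem, side, dv, db]

lemma splitMem_enc (u : V) (b : Bool) (e : Fin N) :
    G.splitMem (enc u b) e ↔ u ∈ G.side b e := by
  cases b <;> simp [splitMem, side, enc]

lemma splitAdj_symm : Symmetric G.splitAdj := by
  rintro a b ⟨e, h1, h2⟩; exact ⟨e, h2, h1⟩

lemma rtg_symm {a b : V ⊕ V} (h : Relation.ReflTransGen G.splitAdj a b) :
    Relation.ReflTransGen G.splitAdj b a :=
  (@Relation.ReflTransGen.symmetric _ G.splitAdj ⟨fun _ _ h => splitAdj_symm h⟩).symm _ _ h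

lemma AnaWalk.to_rtg {u w : V} {bu bw : Bool} {L : List (Fin N)}
    (h : AnaWalk G u bu w bw L) :
    Relation.ReflTransGen G.splitAdj (enc u bu) (enc w bw) := by
  induction h with
  | single e u w bu bw hu hw =>
      exact Relation.ReflTransGen.single
        ⟨e, (splitMem_enc u bu e).2 hu, (splitMem_enc w bw e).2 hw⟩
  | cons e u v w bu b bw L hu hv hL ih =>
      exact Relation.ReflTransGen.head
        ⟨e, (splitMem_enc u bu e).2 hu, (splitMem_enc v b e).2 hv⟩ ih

lemma AnaWalk.first {u w : V} {bu bw : Bool} {L : List (Fin N)}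
    (h : AnaWalk G u bu w bw L) : ∃ e, u ∈ G.side bu e := by
  cases h with
  | single e _ _ _ _ hu _ => exact ⟨e, hu⟩
  | cons e _ _ _ _ _ _ _ hu _ _ => exact ⟨e, hu⟩

lemma AnaWalk.last {u w : V} {bu bw : Bool} {L : List (Fin N)}
    (h : AnaWalk G u bu w bw L) : ∃ e, w ∈ G.side bw e := by
  induction h with
  | single e _ w _ bw _ hw => exact ⟨e, hw⟩
  | cons _ _ _ _ _ _ _ _ _ _ _ ih => exact ih

lemma AnaWalk.restart {x w : V} {b bw : Bool} {M : List (Fin N)}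
    (h : AnaWalk G x b w bw M) {e : Fin N} (he : e ∈ M) :
    ∃ M₂, (e :: M₂) <:+ M ∧
      ∀ u' bu', u' ∈ G.side bu' e → AnaWalk G u' bu' w bw (e :: M₂) := by
  induction h with
  | single f u w bu bw hu hw =>
      simp only [List.mem_singleton] at he; subst he
      exact ⟨[], List.suffix_refl _, fun u' bu' hu' => .single e u' w bu' bw hu' hw⟩
  | cons f u v w bu b' bw L hu hv hL ih =>
      rcases List.mem_cons.1 he with h1 | h2
      · subst h1
        exact ⟨L, List.suffix_refl _,
          fun u' bu' hu' => .cons e u' v w bu' b' bw L hu' hv hL⟩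
      · obtain ⟨M₂, hsuf, hres⟩ := ih h2
        exact ⟨M₂, hsuf.trans (List.suffix_cons f L), hres⟩

lemma AnaWalk.shorten {u w : V} {bu bw : Bool} {L : List (Fin N)}
    (h : AnaWalk G u bu w bw L) :
    ∃ M, M.Nodup ∧ AnaWalk G u bu w bw M := by
  induction h with
  | single e u w bu bw hu hw =>
      exact ⟨[e], List.nodup_singleton e, .single e u w bu bw hu hw⟩
  | cons e u v w bu b bw L hu hv hL ih =>
      obtain ⟨M, hnd, hM⟩ := ih
      by_cases he : e ∈ M
      · obtain ⟨M₂, hsuf, hres⟩ := hM.restart he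
        exact ⟨e :: M₂, hsuf.sublist.nodup hnd, hres u bu hu⟩
      · exact ⟨e :: M, List.nodup_cons.2 ⟨he, hnd⟩, .cons e u v w bu b bw M hu hv hM⟩

lemma AnaWalk.not_nil {u w : V} {bu bw : Bool} (h : AnaWalk G u bu w bw []) : False := by
  cases h

lemma AnaWalk.single_inv {u w : V} {bu bw : Bool} {e : Fin N}
    (h : AnaWalk G u bu w bw [e]) : u ∈ G.side bu e ∧ w ∈ G.side bw e := by
  cases h with
  | single _ _ _ _ _ hu hw => exact ⟨hu, hw⟩
  | cons _ _ _ _ _ _ _ _ _ _ hL => exact absurd hL AnaWalk.not_nil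

lemma rtg_to_walk {a b : V ⊕ V} (h : Relation.ReflTransGen G.splitAdj a b) :
    a = b ∨ ∃ L, AnaWalk G (dv a) (db a) (dv b) (db b) L := by
  induction h using Relation.ReflTransGen.head_induction_on with
  | refl => exact Or.inl rfl
  | head hadj _ ih =>
      obtain ⟨e, h1, h2⟩ := hadj
      rcases ih with rfl | ⟨L, hL⟩
      · exact Or.inr ⟨[e], .single e _ _ _ _
          ((splitMem_iff _ e).1 h1) ((splitMem_iff _ e).1 h2)⟩
      · exact Or.inr ⟨e :: L, .cons e _ _ _ _ _ _ L
          ((splitMem_iff _ e).1 h1) ((splitMem_iff _ e).1 h2) hL⟩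

end DirHG

/-- An `(r,s)`-directed hypergraph is anadiplosis connected if and only if the
underlying undirected hypergraph of its bipartite split is connected. -/
theorem anaConnected_iff_splitConnected (V : Type) (N r s : ℕ) (hr : 0 < r) (hs : 0 < s)
    (G : DirHG V N r s) : G.AnaConnected ↔ G.SplitConnected := by
  constructor
  · rintro ⟨AC1, AC2⟩
    -- from a semi-cycle: the two copies of a vertex in both a tail and a head are joined
    have main : ∀ (u : V) (e f : Fin N), u ∈ G.tail e → u ∈ G.head f →
        Relation.ReflTransGen G.splitAdj (Sum.inl u) (Sum.inr u) := by
      intro u e f h1 h2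
      obtain ⟨L, -, -, hw | hw⟩ := AC2 u ⟨e, h1⟩ ⟨f, h2⟩
      · exact hw.to_rtg
      · exact DirHG.rtg_symm hw.to_rtg
    have bridge : ∀ (u : V) (b₁ b₂ : Bool) (e f : Fin N),
        u ∈ G.side b₁ e → u ∈ G.side b₂ f →
        Relation.ReflTransGen G.splitAdj (DirHG.enc u b₁) (DirHG.enc u b₂) := by
      intro u b₁ b₂ e f h1 h2
      cases b₁ <;> cases b₂
      · exact .refl
      · exact DirHG.rtg_symm (main u f e h2 h1)
      · exact main u e f h1 h2
      · exact .refl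
    have conn : ∀ (u v : V) (b₁ b₂ : Bool) (e f : Fin N),
        u ∈ G.side b₁ e → v ∈ G.side b₂ f →
        Relation.ReflTransGen G.splitAdj (DirHG.enc u b₁) (DirHG.enc v b₂) := by
      intro u v b₁ b₂ e f h1 h2
      by_cases huv : u = v
      · subst huv; exact bridge u b₁ b₂ e f h1 h2
      · have hu' : ∃ e, u ∈ G.tail e ∨ u ∈ G.head e := by
          cases b₁ with
          | true => exact ⟨e, Or.inl h1⟩
          | false => exact ⟨e, Or.inr h1⟩
        have hv' : ∃ e, v ∈ G.tail e ∨ v ∈ G.head e := by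
          cases b₂ with
          | true => exact ⟨f, Or.inl h2⟩
          | false => exact ⟨f, Or.inr h2⟩
        obtain ⟨bu, bv, L, hL⟩ := AC1 u v huv hu' hv'
        obtain ⟨e₁, hfirst⟩ := hL.first
        obtain ⟨e₂, hlast⟩ := hL.last
        exact ((bridge u b₁ bu e e₁ h1 hfirst).trans hL.to_rtg).trans
          (DirHG.rtg_symm (bridge v b₂ bv f e₂ h2 hlast))
    rintro a b ⟨e, ha⟩ ⟨f, hb⟩
    rcases a with u | u <;> rcases b with v | v
    · exact conn u v true true e f ha hb
    · exact conn u v true false e f ha hb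
    · exact conn u v false true e f ha hb
    · exact conn u v false false e f ha hb
  · intro SC
    constructor
    · intro u v huv hu hv
      have key : ∀ (a b : V ⊕ V) (e f : Fin N), G.splitMem a e → G.splitMem b f →
          DirHG.dv a ≠ DirHG.dv b →
          ∃ L, DirHG.AnaWalk G (DirHG.dv a) (DirHG.db a) (DirHG.dv b) (DirHG.db b) L := by
        intro a b e f ha hb hne
        rcases DirHG.rtg_to_walk (SC a b ⟨e, ha⟩ ⟨f, hb⟩) with rfl | ⟨L, hL⟩
        · exact absurd rfl hne
        · exact ⟨L, hL⟩
      obtain ⟨e, he⟩ := hu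
      obtain ⟨f, hf⟩ := hv
      rcases he with he | he <;> rcases hf with hf | hf
      · obtain ⟨L, hL⟩ := key (Sum.inl u) (Sum.inl v) e f he hf huv
        exact ⟨true, true, L, hL⟩
      · obtain ⟨L, hL⟩ := key (Sum.inl u) (Sum.inr v) e f he hf huv
        exact ⟨true, false, L, hL⟩
      · obtain ⟨L, hL⟩ := key (Sum.inr u) (Sum.inl v) e f he hf huv
        exact ⟨false, true, L, hL⟩
      · obtain ⟨L, hL⟩ := key (Sum.inr u) (Sum.inr v) e f he hf huv
        exact ⟨false, false, L, hL⟩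
    · rintro u ⟨e, he⟩ ⟨f, hf⟩
      have h := SC (Sum.inl u) (Sum.inr u) ⟨e, he⟩ ⟨f, hf⟩
      rcases DirHG.rtg_to_walk h with heq | ⟨L, hL⟩
      · exact absurd heq (by simp)
      · obtain ⟨M, hnd, hM⟩ := hL.shorten
        refine ⟨M, hnd, ?_, Or.inl hM⟩
        match M, hM with
        | [], hM => exact absurd hM DirHG.AnaWalk.not_nil
        | [e'], hM =>
            obtain ⟨h1, h2⟩ := hM.single_inv
            exact absurd h2 (Finset.disjoint_left.1 (G.disj e') h1)
        | _ :: _ :: _, _ => simp [Nat.succ_le_succ]
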